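/- Let E = EuclideanSpace ℝ (Fin 3), let T, M, t, m, n : ℝ → E, let κ_c, κ_n, τ_g : ℝ → ℝ, let α₀ ∈ ℝ, and let v ∈ E. Assume T, M, t, m are differentiable at α₀ and that at α₀ the structure equations hold: deriv T α₀ = κ_c α₀ • M α₀, deriv M α₀ = −(κ_c α₀) • T α₀, deriv t α₀ = κ_c α₀ • m α₀ + κ_n α₀ • n α₀, and deriv m α₀ = −(κ_c α₀) • t α₀ + τ_g α₀ • n α₀. Then deriv (fun s => ⟪T s, v⟫ • t s + ⟪M s, v⟫ • m s) α₀ = (κ_n α₀ * ⟪T α₀, v⟫ + τ_g α₀ * ⟪M α₀, v⟫) • n α₀. -/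

import Mathlib

open scoped RealInnerProductSpace

/-- Equation (bQprep) of the paper, applied to an arbitrary fixed vector `v`:
for the rotation field `Q = t ⊗ T + m ⊗ M` built from the planar Darboux frame
`{T, M}` (with `T' = κ_c M`, `M' = −κ_c T`) and the image Darboux frame
`{t, m, n}` (with `t' = κ_c m + κ_n n`, `m' = −κ_c t + τ_g n`), one has
`(Q v)' = (κ_n (T·v) + τ_g (M·v)) n`. -/
theorem stmt8
    (T M t m n : ℝ → EuclideanSpace ℝ (Fin 3))
    (κc κn τg : ℝ → ℝ) (α₀ : ℝ) (v : EuclideanSpace ℝ (Fin 3))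
    (hT : DifferentiableAt ℝ T α₀) (hM : DifferentiableAt ℝ M α₀)
    (ht : DifferentiableAt ℝ t α₀) (hm : DifferentiableAt ℝ m α₀)
    (hT' : deriv T α₀ = κc α₀ • M α₀)
    (hM' : deriv M α₀ = -(κc α₀) • T α₀)
    (ht' : deriv t α₀ = κc α₀ • m α₀ + κn α₀ • n α₀)
    (hm' : deriv m α₀ = -(κc α₀) • t α₀ + τg α₀ • n α₀) :
    deriv (fun s => ⟪T s, v⟫ • t s + ⟪M s, v⟫ • m s) α₀ =
      (κn α₀ * ⟪T α₀, v⟫ + τg α₀ * ⟪M α₀, v⟫) • n α₀ := by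
  have hTd : HasDerivAt T (κc α₀ • M α₀) α₀ := hT' ▸ hT.hasDerivAt
  have hMd : HasDerivAt M (-(κc α₀) • T α₀) α₀ := hM' ▸ hM.hasDerivAt
  have htd : HasDerivAt t (κc α₀ • m α₀ + κn α₀ • n α₀) α₀ := ht' ▸ ht.hasDerivAt
  have hmd : HasDerivAt m (-(κc α₀) • t α₀ + τg α₀ • n α₀) α₀ := hm' ▸ hm.hasDerivAt
  have hiT : HasDerivAt (fun s => ⟪T s, v⟫) ⟪κc α₀ • M α₀, v⟫ α₀ :=
    (hTd.inner ℝ (hasDerivAt_const α₀ v)).congr_deriv (by simp)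
  have hiM : HasDerivAt (fun s => ⟪M s, v⟫) ⟪-(κc α₀) • T α₀, v⟫ α₀ :=
    (hMd.inner ℝ (hasDerivAt_const α₀ v)).congr_deriv (by simp)
  have h := ((hiT.smul htd).add (hiM.smul hmd)).deriv
  rw [show (fun s => ⟪T s, v⟫ • t s + ⟪M s, v⟫ • m s) = ((fun s => ⟪T s, v⟫) • t + (fun s => ⟪M s, v⟫) • m) from rfl, h]
  simp only [neg_smul, inner_neg_left, real_inner_smul_left, smul_add, smul_smul, neg_mul]
  module
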